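/- Let L, r > 0, 0 < t ≤ 1, and ε > 0 with (L + r)*ε < 1. Let Φ and Γ be r-admissible graphs in G_L, let η ∈ ℝ, and let ξ, ζ ∈ ℝ satisfy η = ξ + ε*t*(Φ(ξ)(ξ) - T_c) and η = ζ + ε*t*(Γ(ζ)(ζ) - T_c). Then |ξ - ζ| ≤ (t*ε/(1 - (L + r)*ε)) * sup_{σ∈ℝ} ‖Φ(σ) - Γ(σ)‖_∞. -/

import Mathlib

noncomputable section

open scoped BoundedContinuousFunction

namespace Budyko

/-- Solar constant (W/m²). -/
def Q : ℝ := 343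
/-- OLR constant A (W/m²). -/
def A : ℝ := 202
/-- OLR constant B (W/m²/°C). -/
def B : ℝ := 1.9
/-- Transport constant C (W/m²/°C). -/
def C : ℝ := 3.04
/-- Critical temperature (°C). -/
def Tc : ℝ := -10

/-- Insolation distribution. -/
def s (y : ℝ) : ℝ := 1 - 0.241 * (3 * y ^ 2 - 1)

/-- Clamp to `[0,1]`. -/
def clamp (y : ℝ) : ℝ := min (max y 0) 1

/-- Insolation extended to the real line. -/
def sTilde (y : ℝ) : ℝ := s (clamp y)

/-- Iceline-dependent smooth albedo with steepness `M`. -/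
def albedo (M η y : ℝ) : ℝ := 0.47 + 0.15 * Real.tanh (M * (clamp y - η))

/-- The Budyko vector field `F(T,η)(y)`. -/
def F (M : ℝ) (T : ℝ →ᵇ ℝ) (η y : ℝ) : ℝ :=
  Q * sTilde y * (1 - albedo M η y) - (B + C) * T y - A + C * ∫ u in (0:ℝ)..1, T u

/-- `g(η) = ∫₀¹ Q s(y) (1 - a(η)(y)) dy`. -/
def g (M η : ℝ) : ℝ := ∫ y in (0:ℝ)..1, Q * s y * (1 - albedo M η y)

/-- The local equilibrium temperature profile `T*(η)(y)`. -/
def Tstar (M η y : ℝ) : ℝ :=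
  (Q * sTilde y * (1 - albedo M η y) - A + (C / B) * (g M η - A)) / (B + C)

/-- Membership in the class `G_L` of Lipschitz graphs. -/
def MemGL (L : ℝ) (Φ : ℝ → ℝ →ᵇ ℝ) : Prop :=
  ∀ ζ η : ℝ, ‖Φ ζ - Φ η‖ ≤ L * |ζ - η|

/-- A graph is `r`-admissible if `‖Φ‖_G ≤ r` and every `Φ(η)` is `r`-Lipschitz. -/
def Admissible (r : ℝ) (Φ : ℝ → ℝ →ᵇ ℝ) : Prop :=
  (∀ η : ℝ, ‖Φ η‖ ≤ r) ∧ ∀ η x z : ℝ, |Φ η x - Φ η z| ≤ r * |x - z|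

/-- `Ψ` is a graph-transform image of `Φ` (time step `t`, slow parameter `ε`). -/
def IsGTImage (M t ε : ℝ) (Φ Ψ : ℝ → ℝ →ᵇ ℝ) : Prop :=
  ∀ η ξ : ℝ, η = ξ + ε * t * (Φ ξ ξ - Tc) → ∀ y : ℝ, Ψ η y = Φ ξ y + t * F M (Φ ξ) ξ y

/-- `Φ` is a fixed point of the Budyko graph transform. -/
def IsGTFixed (M t ε : ℝ) (Φ : ℝ → ℝ →ᵇ ℝ) : Prop := IsGTImage M t ε Φ Φ
/-- Estimate comparing the two iceline preimages of a common η under two graphs. -/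
theorem iceline_preimage_comparison (L r t ε : ℝ)
    (hL : 0 < L) (hr : 0 < r) (ht0 : 0 < t) (ht1 : t ≤ 1) (hε : 0 < ε)
    (hsmall : (L + r) * ε < 1)
    (Φ Γ : ℝ → ℝ →ᵇ ℝ)
    (hΦa : Admissible r Φ) (hΦL : MemGL L Φ)
    (hΓa : Admissible r Γ) (hΓL : MemGL L Γ)
    (η ξ ζ : ℝ)
    (hξ : η = ξ + ε * t * (Φ ξ ξ - Tc))
    (hζ : η = ζ + ε * t * (Γ ζ ζ - Tc)) :
    |ξ - ζ| ≤ (t * ε / (1 - (L + r) * ε)) * ⨆ σ : ℝ, ‖Φ σ - Γ σ‖ := by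

  set D := ⨆ σ : ℝ, ‖Φ σ - Γ σ‖ with hD
  have hbdd : BddAbove (Set.range fun σ : ℝ => ‖Φ σ - Γ σ‖) := by
    refine ⟨2 * r, ?_⟩
    rintro x ⟨σ, rfl⟩
    calc ‖Φ σ - Γ σ‖ ≤ ‖Φ σ‖ + ‖Γ σ‖ := norm_sub_le _ _
      _ ≤ r + r := add_le_add (hΦa.1 σ) (hΓa.1 σ)
      _ = 2 * r := by ring
  have hle : ∀ σ : ℝ, ‖Φ σ - Γ σ‖ ≤ D := fun σ => le_ciSup hbdd σ
  have hD0 : 0 ≤ D := le_trans (norm_nonneg _) (hle 0)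
  have h1 : |Γ ζ ζ - Φ ζ ζ| ≤ D := by
    have := (Φ ζ - Γ ζ).norm_coe_le_norm ζ
    simp only [BoundedContinuousFunction.coe_sub, Pi.sub_apply, Real.norm_eq_abs] at this
    calc |Γ ζ ζ - Φ ζ ζ| = |Φ ζ ζ - Γ ζ ζ| := abs_sub_comm _ _
      _ ≤ ‖Φ ζ - Γ ζ‖ := this
      _ ≤ D := hle ζ
  have h2 : |Φ ζ ζ - Φ ξ ζ| ≤ L * |ζ - ξ| := by
    have := (Φ ζ - Φ ξ).norm_coe_le_norm ζ
    simp only [BoundedContinuousFunction.coe_sub, Pi.sub_apply, Real.norm_eq_abs] at this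
    exact this.trans (hΦL ζ ξ)
  have h3 : |Φ ξ ζ - Φ ξ ξ| ≤ r * |ζ - ξ| := hΦa.2 ξ ζ ξ
  have key : |Γ ζ ζ - Φ ξ ξ| ≤ D + L * |ξ - ζ| + r * |ξ - ζ| := by
    have habs : |ζ - ξ| = |ξ - ζ| := abs_sub_comm _ _
    calc |Γ ζ ζ - Φ ξ ξ| ≤ |Γ ζ ζ - Φ ζ ζ| + |Φ ζ ζ - Φ ξ ξ| := abs_sub_le _ _ _
      _ ≤ |Γ ζ ζ - Φ ζ ζ| + (|Φ ζ ζ - Φ ξ ζ| + |Φ ξ ζ - Φ ξ ξ|) :=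
          add_le_add_right (abs_sub_le _ _ _) _
      _ ≤ D + (L * |ξ - ζ| + r * |ξ - ζ|) := by
          rw [habs] at h2 h3; exact add_le_add h1 (add_le_add h2 h3)
      _ = D + L * |ξ - ζ| + r * |ξ - ζ| := by ring
  have heq : ξ - ζ = ε * t * (Γ ζ ζ - Φ ξ ξ) := by linear_combination hζ - hξ
  have ha : |ξ - ζ| = ε * t * |Γ ζ ζ - Φ ξ ξ| := by
    rw [heq, abs_mul, abs_of_nonneg (by positivity : (0:ℝ) ≤ ε * t)]
  have hmain : |ξ - ζ| ≤ ε * t * (D + L * |ξ - ζ| + r * |ξ - ζ|) := by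
    have := mul_le_mul_of_nonneg_left key (show (0:ℝ) ≤ ε * t by positivity)
    linarith
  have hden : 0 < 1 - (L + r) * ε := by linarith
  have habs0 : 0 ≤ |ξ - ζ| := abs_nonneg _
  rw [div_mul_eq_mul_div, le_div_iff₀ hden]
  nlinarith [mul_nonneg habs0 hD0, mul_pos ht0 hε, mul_nonneg (mul_nonneg hε.le ht0.le) hD0,
    mul_nonneg habs0 (mul_nonneg hε.le (sub_nonneg.mpr ht1))]
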